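/- arXiv:1406.6090 — 2 statements merged into one kernel-verified Lean document; each statement's English description precedes it below -/
import Mathlib

section
/- Let I ⊆ ℝ be an open interval, U : I → ℝ twice continuously differentiable with U(v) > 0 and U′(v) > 0 for all v ∈ I, and suppose there is a constant κ ∈ ℝ with κ ≠ 0 and κ ≠ −1 such that −U′(v)²/(U″(v)U(v)) = κ for all v ∈ I. Then there exist constants c ≠ 0, a, b with b ≠ 0 such that a + b·v > 0 on I and U(v) = c·(a + b·v)^{κ/(κ+1)} for all v ∈ I. -/
/-- Constant on a convex open set if `HasDerivAt f 0` everywhere. -/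
lemma const_of_hasDerivAt_zero {s : Set ℝ} (hs : Convex ℝ s) (ho : IsOpen s)
    {f : ℝ → ℝ} (hf : ∀ v ∈ s, HasDerivAt f 0 v) {x y : ℝ} (hx : x ∈ s) (hy : y ∈ s) :
    f x = f y := by
  apply hs.is_const_of_fderivWithin_eq_zero (f := f)
    (fun v hv => ((hf v hv).differentiableAt.differentiableWithinAt)) _ hx hy
  intro v hv
  have h := ((hf v hv).hasFDerivAt.hasFDerivWithinAt).fderivWithin (ho.uniqueDiffOn v hv)
  rw [h]
  ext
  simp

/-- If `U` is twice continuously differentiable on an open interval `I`,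
positive and strictly increasing there, and the ratio `−U′(v)²/(U″(v)U(v))` is a constant
`κ ∉ {0, −1}` on `I`, then `U(v) = c·(a + b·v)^{κ/(κ+1)}` on `I` for some constants
`c ≠ 0`, `b ≠ 0`, `a` with `a + b·v > 0` on `I`. -/
theorem hara_characterization (I : Set ℝ) (hIopen : IsOpen I) (hIconn : I.OrdConnected)
    (U : ℝ → ℝ) (hU : ContDiffOn ℝ 2 U I)
    (hUpos : ∀ v ∈ I, 0 < U v) (hU'pos : ∀ v ∈ I, 0 < deriv U v)
    (κ : ℝ) (hκ0 : κ ≠ 0) (hκ1 : κ ≠ -1)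
    (hratio : ∀ v ∈ I, -(deriv U v) ^ 2 / (deriv (deriv U) v * U v) = κ) :
    ∃ c a b : ℝ, c ≠ 0 ∧ b ≠ 0 ∧ (∀ v ∈ I, 0 < a + b * v) ∧
      ∀ v ∈ I, U v = c * (a + b * v) ^ (κ / (κ + 1)) := by
  rcases I.eq_empty_or_nonempty with hI | ⟨v₀, hv₀⟩
  · exact ⟨1, 1, 1, one_ne_zero, one_ne_zero, by simp [hI], by simp [hI]⟩
  have hκ1' : κ + 1 ≠ 0 := fun h => hκ1 (by linarith)
  set α : ℝ := (κ + 1) / κ with hα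
  have hαne : α ≠ 0 := div_ne_zero hκ1' hκ0
  have hconv : Convex ℝ I := convex_iff_ordConnected.mpr hIconn
  have hUdiff : ∀ v ∈ I, HasDerivAt U (deriv U v) v := fun v hv =>
    ((hU.differentiableOn (by norm_num)).differentiableAt (hIopen.mem_nhds hv)).hasDerivAt
  have hU'c1 : ContDiffOn ℝ 1 (deriv U) I := hU.deriv_of_isOpen hIopen (by norm_num)
  have hU'diff : ∀ v ∈ I, HasDerivAt (deriv U) (deriv (deriv U) v) v := fun v hv =>
    ((hU'c1.differentiableOn (by norm_num)).differentiableAt (hIopen.mem_nhds hv)).hasDerivAt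
  have hode : ∀ v ∈ I, deriv (deriv U) v * U v = -(deriv U v) ^ 2 / κ := by
    intro v hv
    have h := hratio v hv
    have hne : deriv (deriv U) v * U v ≠ 0 := by
      intro h0
      rw [h0, div_zero] at h
      exact hκ0 h.symm
    field_simp at h ⊢
    rw [← h]; field_simp
    rw [mul_div_right_comm, div_self hne, one_mul]
  set W : ℝ → ℝ := fun v => U v ^ α with hW
  set g : ℝ → ℝ := fun v => α * U v ^ (α - 1) * deriv U v with hg
  have hWd : ∀ v ∈ I, HasDerivAt W (g v) v := by
    intro v hv
    have := (hUdiff v hv).rpow_const (p := α) (Or.inl (hUpos v hv).ne')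
    simpa [hg, mul_comm, mul_assoc, mul_left_comm] using this
  have hgd : ∀ v ∈ I, HasDerivAt g 0 v := by
    intro v hv
    have h1 : HasDerivAt (fun v => U v ^ (α - 1))
        ((α - 1) * U v ^ (α - 1 - 1) * deriv U v) v := by
      have := (hUdiff v hv).rpow_const (p := α - 1) (Or.inl (hUpos v hv).ne')
      simpa [mul_comm, mul_assoc, mul_left_comm] using this
    have h2 := (h1.mul (hU'diff v hv)).const_mul α
    have key : α * ((α - 1) * U v ^ (α - 1 - 1) * deriv U v * deriv U v
        + U v ^ (α - 1) * deriv (deriv U) v) = 0 := by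
      have hUne := (hUpos v hv).ne'
      have e1 : U v ^ (α - 1) = U v ^ (α - 1 - 1) * U v := by
        rw [← Real.rpow_add_one hUne]; ring_nf
      have hα1 : α - 1 = 1 / κ := by rw [hα, div_sub_one hκ0, add_sub_cancel_left]
      have e2 : U v ^ (α - 1) * deriv (deriv U) v
          = U v ^ (α - 1 - 1) * (deriv (deriv U) v * U v) := by rw [e1]; ring
      rw [e2, hode v hv, hα1]
      field_simp
      ring
    rw [key] at h2
    have : g = fun v => α * (U v ^ (α - 1) * deriv U v) := by
      funext v; simp [hg, mul_assoc]
    rw [this]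
    exact h2
  set b : ℝ := g v₀ with hb
  have hgconst : ∀ v ∈ I, g v = b := fun v hv =>
    const_of_hasDerivAt_zero hconv hIopen hgd hv hv₀
  have hbne : b ≠ 0 := by
    have h1 : (0:ℝ) < U v₀ ^ (α - 1) := Real.rpow_pos_of_pos (hUpos v₀ hv₀) _
    exact mul_ne_zero (mul_ne_zero hαne h1.ne') (hU'pos v₀ hv₀).ne'
  set a : ℝ := W v₀ - b * v₀ with ha
  have hWlin : ∀ v ∈ I, W v = a + b * v := by
    intro v hv
    have hd : ∀ v ∈ I, HasDerivAt (fun v => W v - b * v) 0 v := by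
      intro v hv
      have := (hWd v hv).sub ((hasDerivAt_id v).const_mul b)
      rw [hgconst v hv] at this
      simp at this; exact this
    have := const_of_hasDerivAt_zero hconv hIopen hd hv hv₀
    simp only [ha]
    linarith
  refine ⟨1, a, b, one_ne_zero, hbne, ?_, ?_⟩
  · intro v hv
    rw [← hWlin v hv]
    exact Real.rpow_pos_of_pos (hUpos v hv) α
  · intro v hv
    have h1 : κ / (κ + 1) = 1 / α := by rw [hα]; field_simp
    rw [one_mul, ← hWlin v hv, h1, hW]
    simp only
    rw [← Real.rpow_mul (hUpos v hv).le, mul_one_div, div_self hαne, Real.rpow_one]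
end

section
/- Let 𝒰 ⊆ ℝⁿ be open, a : 𝒰 → ℝⁿ continuous, C : 𝒰 → Mat_n(ℝ) continuous with C(x) symmetric positive definite, and let U : ℝ → ℝ be twice differentiable with U(w) ≠ 0, U′(w) ≠ 0, U″(w) ≠ 0 and −U′(w)²/(U″(w)U(w)) = κ for all w, for a constant κ ∈ ℝ. Let Γ : [0,T] × 𝒰 → ℝ_{>0} be C¹ in t and C² in x and satisfy ∂_tΓ + aᵀ∇Γ + (1/2)tr(C∇²Γ) + (κ/2)·(∇log Γ + C⁻¹a)ᵀ C (∇log Γ + C⁻¹a)·Γ = 0 on [0,T] × 𝒰. Then J(t,x,w) := Γ(t,x)·U(w) satisfies ∂_tJ + aᵀ∇_xJ + (1/2)tr(C∇²_xJ) − (1/(2∂²_wJ))·(∇²_{xw}J + C⁻¹a·∂_wJ)ᵀ C (∇²_{xw}J + C⁻¹a·∂_wJ) = 0 on [0,T] × 𝒰 × ℝ. -/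
open Set Matrix

/-- The partial derivative `∂f/∂xⁱ` of a scalar function of `n` real variables. -/
noncomputable def pd {n : ℕ} (i : Fin n) (f : (Fin n → ℝ) → ℝ) (x : Fin n → ℝ) : ℝ :=
  fderiv ℝ f x (Pi.single i 1)

lemma pd_mul_const {n : ℕ} (i : Fin n) {f : (Fin n → ℝ) → ℝ} {x : Fin n → ℝ}
    (hf : DifferentiableAt ℝ f x) (c : ℝ) :
    pd i (fun y => f y * c) x = pd i f x * c := by
  simp only [pd]
  rw [fderiv_mul_const hf c]
  simp only [ContinuousLinearMap.coe_smul', Pi.smul_apply, smul_eq_mul]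
  ring

lemma hjb_algebra (P A Tr Q G U U' U'' k : ℝ) (hG : G ≠ 0) (hU'' : U'' ≠ 0)
    (hP : P + A + 1/2*Tr + k/2 * (G⁻¹*(G⁻¹*Q)) * G = 0)
    (hk : U'^2 = -k*(U''*U)) :
    P*U + U*A + 1/2*(U*Tr) - 1/(2*(G*U''))*(U'*(U'*Q)) = 0 := by
  have e1 : k/2 * (G⁻¹*(G⁻¹*Q)) * G = k*Q/(2*G) := by
    field_simp
  rw [e1] at hP
  have e2 : 1/(2*(G*U''))*(U'*(U'*Q)) = -(k*U*Q/(2*G)) := by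
    have h : U'*(U'*Q) = U'^2 * Q := by ring
    rw [h, hk]
    field_simp
  rw [e2]
  linear_combination U * hP

/-- If `Γ > 0` solves
`∂ₜΓ + aᵀ∇Γ + ½tr(C∇²Γ) + (κ/2)(∇log Γ + C⁻¹a)ᵀC(∇log Γ + C⁻¹a)·Γ = 0` on `[0,T] × 𝒰`,
where `κ = −U′²/(U″U)` is the constant ratio of the HARA utility `U`, then
`J(t,x,w) = Γ(t,x)·U(w)` solves the reduced HJB equation
`∂ₜJ + aᵀ∇ₓJ + ½tr(C∇²ₓJ) − (1/(2∂²_wJ))·(∇²_{xw}J + C⁻¹a·∂_wJ)ᵀC(∇²_{xw}J + C⁻¹a·∂_wJ) = 0`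
on `[0,T] × 𝒰 × ℝ`. -/
theorem ansatz_reduces_hjb {n : ℕ}
    (Uo : Set (Fin n → ℝ)) (hUo : IsOpen Uo) (T : ℝ)
    (a : (Fin n → ℝ) → Fin n → ℝ) (ha : ContinuousOn a Uo)
    (C : (Fin n → ℝ) → Matrix (Fin n) (Fin n) ℝ)
    (hCcont : ∀ i j, ContinuousOn (fun x => C x i j) Uo)
    (hCpos : ∀ x ∈ Uo, (C x).PosDef)
    (κ : ℝ) (Util : ℝ → ℝ)
    (hU1 : Differentiable ℝ Util) (hU2 : Differentiable ℝ (deriv Util))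
    (hUne : ∀ w, Util w ≠ 0) (hU'ne : ∀ w, deriv Util w ≠ 0)
    (hU''ne : ∀ w, deriv (deriv Util) w ≠ 0)
    (hκ : ∀ w, -(deriv Util w) ^ 2 / (deriv (deriv Util) w * Util w) = κ)
    (Γ : ℝ → (Fin n → ℝ) → ℝ)
    (hΓpos : ∀ t ∈ Icc (0 : ℝ) T, ∀ x ∈ Uo, 0 < Γ t x)
    (hΓt : ∀ x ∈ Uo, ∀ t ∈ Icc (0 : ℝ) T, DifferentiableAt ℝ (fun τ => Γ τ x) t)
    (hΓx : ∀ t ∈ Icc (0 : ℝ) T, ContDiffOn ℝ 2 (Γ t) Uo)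
    (hPDE : ∀ t ∈ Icc (0 : ℝ) T, ∀ x ∈ Uo,
      deriv (fun τ => Γ τ x) t
        + a x ⬝ᵥ (fun i => pd i (Γ t) x)
        + 1 / 2 * Matrix.trace (C x * Matrix.of fun i j => pd i (fun x' => pd j (Γ t) x') x)
        + κ / 2 *
            (((fun i => pd i (fun x' => Real.log (Γ t x')) x) + (C x)⁻¹.mulVec (a x)) ⬝ᵥ
              (C x).mulVec
                ((fun i => pd i (fun x' => Real.log (Γ t x')) x) + (C x)⁻¹.mulVec (a x))) *
          Γ t x = 0)
    (J : ℝ → (Fin n → ℝ) → ℝ → ℝ) (hJ : J = fun t x w => Γ t x * Util w) :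
    ∀ t ∈ Icc (0 : ℝ) T, ∀ x ∈ Uo, ∀ w : ℝ,
      deriv (fun τ => J τ x w) t
        + a x ⬝ᵥ (fun i => pd i (fun x' => J t x' w) x)
        + 1 / 2 *
            Matrix.trace (C x * Matrix.of fun i j => pd i (fun x' => pd j (fun x'' => J t x'' w) x') x)
        - 1 / (2 * deriv (deriv (fun w' => J t x w')) w) *
            (((fun i => pd i (fun x' => deriv (fun w' => J t x' w') w) x)
                + deriv (fun w' => J t x w') w • (C x)⁻¹.mulVec (a x)) ⬝ᵥ
              (C x).mulVec
                ((fun i => pd i (fun x' => deriv (fun w' => J t x' w') w) x)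
                  + deriv (fun w' => J t x w') w • (C x)⁻¹.mulVec (a x))) = 0 := by
  subst hJ
  intro t ht x hx w
  have hΓC : ContDiffOn ℝ 2 (Γ t) Uo := hΓx t ht
  have hΓd : ∀ y ∈ Uo, DifferentiableAt ℝ (Γ t) y := fun y hy =>
    (hΓC.differentiableOn (by norm_num)).differentiableAt (hUo.mem_nhds hy)
  have hΓdx : DifferentiableAt ℝ (Γ t) x := hΓd x hx
  have hG : 0 < Γ t x := hΓpos t ht x hx
  -- differentiability of first partials
  have hfd : ∀ j : Fin n, DifferentiableAt ℝ (fun x' => pd j (Γ t) x') x := by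
    intro j
    have h1 : ContDiffOn ℝ 1 (fderiv ℝ (Γ t)) Uo :=
      hΓC.fderiv_of_isOpen hUo (by norm_num)
    have h2 : DifferentiableAt ℝ (fderiv ℝ (Γ t)) x :=
      (h1.differentiableOn one_ne_zero).differentiableAt (hUo.mem_nhds hx)
    exact ((ContinuousLinearMap.apply ℝ ℝ (Pi.single j 1)).differentiable.differentiableAt).comp x h2
  set G := Γ t x with hGdef
  set g : Fin n → ℝ := fun i => pd i (Γ t) x with hgdef
  set b : Fin n → ℝ := (C x)⁻¹.mulVec (a x) with hbdef
  set U := Util w with hUdef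
  set U' := deriv Util w with hU'def
  set U'' := deriv (deriv Util) w with hU''def
  -- time derivative
  have h1 : deriv (fun τ => Γ τ x * Util w) t = deriv (fun τ => Γ τ x) t * U :=
    deriv_mul_const (hΓt x hx t ht) U
  -- first x-derivatives
  have h2 : (fun i => pd i (fun x' => Γ t x' * Util w) x) = U • g := by
    funext i
    simp only [Pi.smul_apply, smul_eq_mul, hgdef]
    rw [pd_mul_const i hΓdx]
    exact mul_comm _ _
  -- second x-derivatives
  have h3 : (Matrix.of fun i j => pd i (fun x' => pd j (fun x'' => Γ t x'' * Util w) x') x)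
      = U • Matrix.of fun i j => pd i (fun x' => pd j (Γ t) x') x := by
    ext i j
    have hev : (fun x' => pd j (fun x'' => Γ t x'' * Util w) x')
        =ᶠ[nhds x] fun x' => pd j (Γ t) x' * U := by
      filter_upwards [hUo.mem_nhds hx] with y hy
      exact pd_mul_const j (hΓd y hy) U
    simp only [Matrix.of_apply, Matrix.smul_apply, smul_eq_mul]
    calc pd i (fun x' => pd j (fun x'' => Γ t x'' * Util w) x') x
        = pd i (fun x' => pd j (Γ t) x' * U) x := by
          show fderiv ℝ (fun x' => pd j (fun x'' => Γ t x'' * Util w) x') x (Pi.single i 1) =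
            fderiv ℝ (fun x' => pd j (Γ t) x' * U) x (Pi.single i 1)
          rw [hev.fderiv_eq]
      _ = pd i (fun x' => pd j (Γ t) x') x * U := pd_mul_const i (hfd j) U
      _ = U * pd i (fun x' => pd j (Γ t) x') x := mul_comm _ _
  -- w-derivatives
  have h4 : deriv (fun w' => Γ t x * Util w') w = G * U' := deriv_const_mul G (hU1 w)
  have h5 : deriv (deriv (fun w' => Γ t x * Util w')) w = G * U'' := by
    have he : deriv (fun w' => Γ t x * Util w') = fun w' => G * deriv Util w' :=
      funext fun w' => deriv_const_mul G (hU1 w')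
    rw [he]
    exact deriv_const_mul G (hU2 w)
  -- mixed derivatives
  have h6 : (fun i => pd i (fun x' => deriv (fun w' => Γ t x' * Util w') w) x) = U' • g := by
    have he : (fun x' => deriv (fun w' => Γ t x' * Util w') w) = fun x' => Γ t x' * U' :=
      funext fun x' => deriv_const_mul (Γ t x') (hU1 w)
    rw [he]
    funext i
    simp only [Pi.smul_apply, smul_eq_mul, hgdef]
    rw [pd_mul_const i hΓdx]
    exact mul_comm _ _
  -- log derivative
  have h7 : (fun i => pd i (fun x' => Real.log (Γ t x')) x) = G⁻¹ • g := by
    have h := (Real.hasDerivAt_log hG.ne').comp_hasFDerivAt x hΓdx.hasFDerivAt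
    funext i
    simp only [Pi.smul_apply, smul_eq_mul, hgdef, pd]
    rw [show (fun x' => Real.log (Γ t x')) = Real.log ∘ Γ t from rfl, h.fderiv]
    simp
  -- rewrite PDE
  have hP := hPDE t ht x hx
  rw [h7, ← hGdef, ← hgdef] at hP
  have hcomb : (G⁻¹ • g + b) = G⁻¹ • (g + G • b) := by
    rw [smul_add, smul_smul, inv_mul_cancel₀ hG.ne', one_smul]
  rw [hcomb] at hP
  set Q := (g + G • b) ⬝ᵥ (C x).mulVec (g + G • b) with hQdef
  have hQsc : (G⁻¹ • (g + G • b)) ⬝ᵥ (C x).mulVec (G⁻¹ • (g + G • b)) = G⁻¹ * (G⁻¹ * Q) := by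
    rw [smul_dotProduct, Matrix.mulVec_smul, dotProduct_smul, smul_eq_mul, smul_eq_mul]
  rw [hQsc] at hP
  -- rewrite goal
  simp only []
  rw [h1, h2, h3, h4, h5, h6]
  have hvsum : U' • g + (G * U') • b = U' • (g + G • b) := by
    rw [smul_add, smul_smul, mul_comm G U']
  rw [hvsum]
  have hQsc2 : (U' • (g + G • b)) ⬝ᵥ (C x).mulVec (U' • (g + G • b)) = U' * (U' * Q) := by
    rw [smul_dotProduct, Matrix.mulVec_smul, dotProduct_smul, smul_eq_mul, smul_eq_mul]
  rw [hQsc2]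
  rw [dotProduct_smul, Matrix.mul_smul, Matrix.trace_smul, smul_eq_mul, smul_eq_mul]
  -- algebra
  have hk : U' ^ 2 = -κ * (U'' * U) := by
    have h := hκ w
    rw [div_eq_iff (mul_ne_zero (hU''ne w) (hUne w))] at h
    rw [hU'def, hU''def, hUdef]
    linear_combination -h
  exact hjb_algebra _ _ _ _ _ _ _ _ _ hG.ne' (hU''ne w) hP hk
end
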